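/- Let p be a real polynomial of degree n with only real zeroes and d ≥ 2 distinct zeroes, and let κ ≥ (n−1)/n be real. Then the polynomial F_κ[p] = p·p'' − κ(p')² has no real zeroes other than multiple zeroes of p; equivalently, Q_κ[p](x) = (p(x)p''(x) − κ(p'(x))²)/p(x)² < 0 for every real x with p(x) ≠ 0. -/

import Mathlib

open Polynomial

/-- Let `p` be a real-rooted polynomial of degree `n ≥ 2` with at least two
distinct zeroes and `κ ≥ (n−1)/n`. Then `F_κ[p] = p·p'' − κ(p')²` has no real
zeroes other than zeroes of `p`; equivalently
`Q_κ[p](x) = (p(x)p''(x) − κ(p'(x))²)/p(x)² < 0` whenever `p(x) ≠ 0`. -/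
-- derivative identities for products of linear factors
theorem eval_deriv_prod (x : ℝ) (R : Multiset ℝ) (h : ∀ r ∈ R, x - r ≠ 0) :
    (derivative (R.map fun r => X - C r).prod).eval x
      = ((R.map fun r => X - C r).prod).eval x * (R.map fun r => 1 / (x - r)).sum ∧
    (derivative (derivative (R.map fun r => X - C r).prod)).eval x
      = ((R.map fun r => X - C r).prod).eval x *
        ((R.map fun r => 1 / (x - r)).sum ^ 2 - (R.map fun r => (1 / (x - r)) ^ 2).sum) := by
  induction R using Multiset.induction_on with
  | empty => simp
  | cons a R ih =>
      have ha : x - a ≠ 0 := h a (Multiset.mem_cons_self a R)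
      obtain ⟨ih1, ih2⟩ := ih (fun r hr => h r (Multiset.mem_cons_of_mem hr))
      set Q := (R.map fun r => X - C r).prod with hQ
      have hprod : ((a ::ₘ R).map fun r => X - C r).prod = (X - C a) * Q := by
        rw [Multiset.map_cons, Multiset.prod_cons]
      have hd : derivative ((X - C a) * Q) = Q + (X - C a) * derivative Q := by
        rw [derivative_mul, derivative_X_sub_C, one_mul]
      have hdd : derivative (derivative ((X - C a) * Q))
          = 2 * derivative Q + (X - C a) * derivative (derivative Q) := by
        rw [hd, derivative_add, derivative_mul, derivative_X_sub_C, one_mul]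
        ring
      have hs : (x - a) * (1 / (x - a)) = 1 := mul_one_div_cancel ha
      set T1 := (Multiset.map (fun r => 1 / (x - r)) R).sum with hT1
      constructor
      · rw [hprod, hd]
        simp only [Multiset.map_cons, Multiset.sum_cons, eval_add, eval_mul, eval_sub, eval_X,
          eval_C, ih1, ← hT1]
        linear_combination (-eval x Q) * hs
      · rw [hprod, hdd]
        simp only [Multiset.map_cons, Multiset.sum_cons, eval_add, eval_mul, eval_sub, eval_X,
          eval_C, eval_ofNat, ih1, ih2, ← hT1]
        linear_combination (-2 * eval x Q * T1) * hs

-- strict Cauchy-Schwarz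
theorem strict_cs {k : ℕ} (f : Fin k → ℝ) (i j : Fin k) (hij : f i ≠ f j) :
    (∑ i, f i) ^ 2 < k * ∑ i, f i ^ 2 := by
  have key : (k : ℝ) * (∑ i, f i ^ 2) - (∑ i, f i) ^ 2
      = (1 / 2) * ∑ a : Fin k, ∑ b : Fin k, (f a - f b) ^ 2 := by
    have : ∀ a b : Fin k, (f a - f b) ^ 2 = f a ^ 2 + f b ^ 2 - 2 * (f a * f b) := by
      intro a b; ring
    simp only [this, Finset.sum_sub_distrib, Finset.sum_add_distrib, Finset.sum_const,
      Finset.card_univ, Fintype.card_fin, nsmul_eq_mul, ← Finset.mul_sum, ← Finset.sum_mul]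
    ring
  have hpos : 0 < ∑ a : Fin k, ∑ b : Fin k, (f a - f b) ^ 2 := by
    apply Finset.sum_pos' (fun a _ => Finset.sum_nonneg fun b _ => sq_nonneg _)
    refine ⟨i, Finset.mem_univ i, ?_⟩
    apply Finset.sum_pos' (fun b _ => sq_nonneg _)
    refine ⟨j, Finset.mem_univ j, ?_⟩
    have := sub_ne_zero_of_ne hij
    positivity
  nlinarith [key, hpos]

theorem Q_kappa_neg_of_kappa_ge (p : ℝ[X]) (n : ℕ) (hn : p.natDegree = n) (hn2 : 2 ≤ n)
    (hreal : ∀ z : ℂ, (p.map (algebraMap ℝ ℂ)).IsRoot z → z.im = 0)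
    (hdist : ∃ x y : ℝ, x ≠ y ∧ p.IsRoot x ∧ p.IsRoot y)
    (κ : ℝ) (hκ : ((n : ℝ) - 1) / n ≤ κ) :
    (∀ x : ℝ,
        (p * derivative (derivative p) - C κ * (derivative p) ^ 2).eval x = 0 →
        p.eval x = 0) ∧
    (∀ x : ℝ, p.eval x ≠ 0 →
      (p.eval x * (derivative (derivative p)).eval x - κ * ((derivative p).eval x) ^ 2)
        / (p.eval x) ^ 2 < 0) := by
  classical
  have hp0 : p ≠ 0 := by
    intro h
    rw [h, natDegree_zero] at hn
    omega
  set f : ℝ →+* ℂ := algebraMap ℝ ℂ with hfdef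
  have hfinj : Function.Injective f := (algebraMap ℝ ℂ).injective
  have hmap0 : p.map f ≠ 0 := (Polynomial.map_ne_zero_iff hfinj).mpr hp0
  -- the complex roots
  have hsplC : Multiset.card (p.map f).roots = n := by
    have hs : Splits (p.map f) := splits_iff_card_roots.mpr IsAlgClosed.card_roots_eq_natDegree
    rw [splits_iff_card_roots.mp hs, natDegree_map, hn]
  -- complex roots are images of real roots with multiplicity
  have hle : (p.map f).roots ≤ p.roots.map f := by
    rw [Multiset.le_iff_count]
    intro b
    by_cases hb : b ∈ (p.map f).roots
    · have hroot : (p.map f).IsRoot b := isRoot_of_mem_roots hb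
      have him : b.im = 0 := hreal b hroot
      have hbre : f b.re = b := by
        apply Complex.ext <;> simp [hfdef, him]
      rw [← hbre, Multiset.count_map_eq_count' f _ hfinj, count_roots, count_roots,
        eq_rootMultiplicity_map hfinj]
    · simp [Multiset.count_eq_zero_of_notMem hb]
  have hRcard : Multiset.card p.roots = n := by
    have h1 : Multiset.card p.roots ≤ n := hn ▸ p.card_roots'
    have h2 : n ≤ Multiset.card p.roots := by
      calc n = Multiset.card (p.map f).roots := hsplC.symm
        _ ≤ Multiset.card (p.roots.map f) := Multiset.card_le_card hle
        _ = Multiset.card p.roots := Multiset.card_map _ _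
    omega
  have hfact : C p.leadingCoeff * (p.roots.map fun a => X - C a).prod = p :=
    C_leadingCoeff_mul_prod_multiset_X_sub_C (hn ▸ hRcard)
  -- main pointwise estimate
  have key : ∀ x : ℝ, p.eval x ≠ 0 →
      (p.eval x * (derivative (derivative p)).eval x - κ * ((derivative p).eval x) ^ 2)
        / (p.eval x) ^ 2 < 0 := by
    intro x hx
    have hxr : ∀ r ∈ p.roots, x - r ≠ 0 := by
      intro r hr hxr0
      apply hx
      have : x = r := by linarith [sub_eq_zero.mp hxr0]
      rw [this]
      exact (isRoot_of_mem_roots hr)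
    obtain ⟨hd1, hd2⟩ := eval_deriv_prod x p.roots hxr
    set a := p.leadingCoeff with ha
    set S1 := (p.roots.map fun r => 1 / (x - r)).sum with hS1def
    set S2 := (p.roots.map fun r => (1 / (x - r)) ^ 2).sum with hS2def
    have hp' : (derivative p).eval x = p.eval x * S1 := by
      conv_lhs => rw [← hfact]
      rw [derivative_C_mul]
      conv_rhs => rw [← hfact]
      simp only [eval_mul, eval_C, hd1]
      ring
    have hp'' : (derivative (derivative p)).eval x = p.eval x * (S1 ^ 2 - S2) := by
      conv_lhs => rw [← hfact]
      rw [derivative_C_mul, derivative_C_mul]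
      conv_rhs => rw [← hfact]
      simp only [eval_mul, eval_C, hd2]
      ring
    -- strict Cauchy-Schwarz
    have hCS : S1 ^ 2 < n * S2 := by
      set l := p.roots.toList with hl
      have hlR : (l : Multiset ℝ) = p.roots := Multiset.coe_toList _
      have hlen : l.length = n := by
        rw [← hRcard, ← hlR]; simp
      obtain ⟨x₀, y₀, hxy, hx₀, hy₀⟩ := hdist
      have hx₀m : x₀ ∈ l := by rw [← Multiset.mem_coe, hlR]; exact mem_roots'.mpr ⟨hp0, hx₀⟩
      have hy₀m : y₀ ∈ l := by rw [← Multiset.mem_coe, hlR]; exact mem_roots'.mpr ⟨hp0, hy₀⟩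
      obtain ⟨i, hilt, hi⟩ := List.mem_iff_getElem.mp hx₀m
      obtain ⟨j, hjlt, hj⟩ := List.mem_iff_getElem.mp hy₀m
      set g : ℝ → ℝ := fun r => 1 / (x - r) with hg
      have hgne : g x₀ ≠ g y₀ := by
        have h1 : x - x₀ ≠ 0 := hxr x₀ (by rw [← hlR]; exact Multiset.mem_coe.mpr hx₀m)
        have h2 : x - y₀ ≠ 0 := hxr y₀ (by rw [← hlR]; exact Multiset.mem_coe.mpr hy₀m)
        simp only [hg]
        intro hgeq
        apply hxy
        field_simp at hgeq
        linarith
      have hCS' := strict_cs (fun i : Fin l.length => g l[i.1]) ⟨i, hilt⟩ ⟨j, hjlt⟩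
        (by simpa [hi, hj] using hgne)
      rw [Fin.sum_univ_fun_getElem l g] at hCS'
      have hsq : ∑ i : Fin l.length, g l[i.1] ^ 2 = (l.map fun r => (g r) ^ 2).sum := by
        simpa using Fin.sum_univ_fun_getElem l (fun r => g r ^ 2)
      rw [hsq, hlen] at hCS'
      have e1 : S1 = (l.map g).sum := by
        rw [hS1def, ← hlR]; simp [hg]
      have e2 : S2 = (l.map fun r => (g r) ^ 2).sum := by
        rw [hS2def, ← hlR]; simp [hg]
      rw [e1, e2]
      exact hCS'
    have hN : (2 : ℝ) ≤ (n : ℝ) := by exact_mod_cast hn2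
    have hNpos : (0 : ℝ) < n := by linarith
    have hκ' : (n : ℝ) - 1 ≤ κ * n := by
      rw [div_le_iff₀ hNpos] at hκ
      linarith
    have hS2pos : 0 < S2 := by nlinarith [sq_nonneg S1]
    -- conclude
    have hpx2 : 0 < (p.eval x) ^ 2 := by positivity
    have hkey2 : (1 - κ) * S1 ^ 2 - S2 < 0 := by
      nlinarith [mul_le_mul_of_nonneg_right hκ' (sq_nonneg S1), hCS, hNpos, hS2pos, sq_nonneg S1]
    rw [hp', hp'', div_neg_iff]
    right
    refine ⟨?_, hpx2⟩
    have heq : p.eval x * (p.eval x * (S1 ^ 2 - S2)) - κ * (p.eval x * S1) ^ 2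
        = (p.eval x) ^ 2 * ((1 - κ) * S1 ^ 2 - S2) := by ring
    rw [heq]
    exact mul_neg_of_pos_of_neg hpx2 hkey2
  refine ⟨?_, key⟩
  intro x hx
  by_contra hpx
  have := key x hpx
  simp only [eval_sub, eval_mul, eval_C, eval_pow] at hx
  rw [hx] at this
  simp at this
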